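/- Let k be an integer with 0 ≤ k ≤ m-1, and define a = (γ^(2m) + γ^(m+6k+2) + γ^(3k+1))/(3γ^(m+3k+1)), b = (γ^(2m+3k+1) + γ^(m+6k+2) + 1)/(3γ^(m+3k+1)), c = (γ^(6k+2) + γ^(3k+1) + 1)/(3γ^(3k+1)) in F_q, and let g(x) = a·x^(2m+1) + b·x^(m+1) + c·x. Then for every integer i with 0 ≤ i ≤ m-1 one has g(γ^(3(i+k)+1)) = γ^(3i). -/

import Mathlib

theorem stmt11 (q m : ℕ) (F : Type*) [Field F] [Fintype F]
    (hq : Fintype.card F = q) (hodd : Odd q) (hq3 : q % 3 = 1)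
    (hm : m = (q - 1) / 3)
    (γ : Fˣ) (hγ : ∀ x : Fˣ, x ∈ Subgroup.zpowers γ)
    (k : ℕ) (hk : k ≤ m - 1)
    (a b c : F)
    (ha : a = ((γ : F)^(2*m) + (γ : F)^(m+6*k+2) + (γ : F)^(3*k+1)) / (3 * (γ : F)^(m+3*k+1)))
    (hb : b = ((γ : F)^(2*m+3*k+1) + (γ : F)^(m+6*k+2) + 1) / (3 * (γ : F)^(m+3*k+1)))
    (hc : c = ((γ : F)^(6*k+2) + (γ : F)^(3*k+1) + 1) / (3 * (γ : F)^(3*k+1)))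
    (g : F → F)
    (hg : ∀ x : F, g x = a * x^(2*m+1) + b * x^(m+1) + c * x) :
    ∀ i : ℕ, i ≤ m - 1 → g ((γ : F)^(3*(i+k)+1)) = (γ : F)^(3*i) := by
  intro i hi
  classical
  have hu : (γ : F) ≠ 0 := Units.ne_zero γ
  have hq2 : 2 ≤ q := by
    have := Fintype.one_lt_card (α := F)
    omega
  obtain ⟨t, ht⟩ := hodd
  have hq7 : 7 ≤ q := by omega
  have h31 : 3 ∣ q - 1 := by omega
  have h3m : 3 * m = q - 1 := by rw [hm]; exact Nat.mul_div_cancel' h31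
  have hm1 : 1 ≤ m := by omega
  have h3F : (3 : F) ≠ 0 := by
    intro h
    have h1 : ringChar F ∣ 3 := ringChar.dvd (by exact_mod_cast h)
    have h2 : ringChar F ∣ q := by
      have hc0 := FiniteField.cast_card_eq_zero F
      rw [hq] at hc0
      exact ringChar.dvd (by exact_mod_cast hc0)
    have hp : (ringChar F).Prime := CharP.char_is_prime F (ringChar F)
    rcases (Nat.Prime.eq_one_or_self_of_dvd (by norm_num) _ h1) with h' | h'
    · exact hp.ne_one h'
    · obtain ⟨s, hs⟩ := h2
      rw [h'] at hs
      omega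
  have hu3m : (γ : F) ^ (3 * m) = 1 := by
    rw [h3m, ← hq]
    exact FiniteField.pow_card_sub_one_eq_one _ hu
  have hord : orderOf γ = q - 1 := by
    rw [orderOf_eq_card_of_forall_mem_zpowers hγ, Nat.card_eq_fintype_card, Fintype.card_units, hq]
  have hγm : (γ : F) ^ m ≠ 1 := by
    intro h
    have hγm' : γ ^ m = 1 := Units.ext (by push_cast; simpa using h)
    have hd := orderOf_dvd_of_pow_eq_one hγm'
    rw [hord] at hd
    have := Nat.le_of_dvd (by omega) hd
    omega
  have hω : (γ : F) ^ (2 * m) + (γ : F) ^ m + 1 = 0 := by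
    have hfac : ((γ : F) ^ m - 1) * ((γ : F) ^ (2 * m) + (γ : F) ^ m + 1) = 0 := by
      linear_combination hu3m
    rcases mul_eq_zero.mp hfac with h | h
    · exact absurd (sub_eq_zero.mp h) hγm
    · exact h
  rw [hg, ha, hb, hc]
  have e1 : ((γ : F) ^ (3 * (i + k) + 1)) ^ (2 * m + 1) = (γ : F) ^ (2 * m + 3 * (i + k) + 1) := by
    rw [← pow_mul]
    have h : (3 * (i + k) + 1) * (2 * m + 1) = 3 * m * (2 * (i + k)) + (2 * m + 3 * (i + k) + 1) := by ring
    rw [h, pow_add, pow_mul, hu3m, one_pow, one_mul]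
  have e2 : ((γ : F) ^ (3 * (i + k) + 1)) ^ (m + 1) = (γ : F) ^ (m + 3 * (i + k) + 1) := by
    rw [← pow_mul]
    have h : (3 * (i + k) + 1) * (m + 1) = 3 * m * (i + k) + (m + 3 * (i + k) + 1) := by ring
    rw [h, pow_add, pow_mul, hu3m, one_pow, one_mul]
  rw [e1, e2]
  have hp1 : (3 : F) * (γ : F) ^ (m + 3 * k + 1) ≠ 0 := mul_ne_zero h3F (pow_ne_zero _ hu)
  field_simp
  linear_combination (3 * (γ : F) ^ (3 * k + 1) * (γ : F) ^ (m + 3 * (i + k) + 1)) *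
    (((γ : F) ^ (6 * k + 2) + (γ : F) ^ (3 * k + 1)) * hω + hu3m)
    - 2 * (γ : F) ^ (m + 6 * k + 3 * i + 2) * hu3m
    - 2 * ((γ : F) ^ (m + 9 * k + 3 * i + 3) + (γ : F) ^ (m + 12 * k + 3 * i + 4)) * hω
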